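/- Let G=(V,E) be a finite simple graph and G² the square of G (same vertex set; u and v adjacent in G² iff they are adjacent in G or have a common neighbor). If D ⊆ V counters every attack A of size at most k such that the induced subgraph G²[A] is connected, then D counters every attack of size at most k. -/

import Mathlib

open Finset

variable {V : Type*}

/-- The closed neighborhood of a vertex. -/
def closedNbhd [Fintype V] [DecidableEq V] (G : SimpleGraph V) [DecidableRel G.Adj]
    (v : V) : Finset V :=
  insert v (G.neighborFinset v)

/-- The closed neighborhood of a set of vertices. -/
def closedNbhdSet [Fintype V] [DecidableEq V] (G : SimpleGraph V) [DecidableRel G.Adj]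
    (S : Finset V) : Finset V :=
  S.biUnion (closedNbhd G)

/-- `D` counters the attack `A`: there is an injective assignment of distinct
defenders in `D` to attacked vertices, each defender in the closed neighborhood
of the vertex it defends. -/
def Counters [Fintype V] [DecidableEq V] (G : SimpleGraph V) [DecidableRel G.Adj]
    (D A : Finset V) : Prop :=
  ∃ f : V → V, Set.InjOn f ↑A ∧ ∀ a ∈ A, f a ∈ D ∧ f a ∈ closedNbhd G a

/-- The square of a graph: vertices at distance at most 2 are adjacent. -/
def graphSquare (G : SimpleGraph V) : SimpleGraph V where
  Adj u v := u ≠ v ∧ (G.Adj u v ∨ ∃ w, G.Adj u w ∧ G.Adj w v)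
  symm := by
    constructor
    rintro u v ⟨hne, h | ⟨w, hw1, hw2⟩⟩
    · exact ⟨hne.symm, Or.inl h.symm⟩
    · exact ⟨hne.symm, Or.inr ⟨w, hw2.symm, hw1.symm⟩⟩
  loopless := by constructor; rintro v ⟨hne, -⟩; exact hne rfl

/-- If `D` counters every attack of size at most `k` that is connected in `G²`,
then `D` counters every attack of size at most `k`. -/
theorem connected_attacks_suffice [Fintype V] [DecidableEq V]
    (G : SimpleGraph V) [DecidableRel G.Adj] (k : ℕ) (D : Finset V)
    (hD : ∀ A : Finset V, A.card ≤ k →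
      ((graphSquare G).induce (↑A : Set V)).Connected → Counters G D A)
    (A : Finset V) (hA : A.card ≤ k) :
    Counters G D A := by
  classical
  induction A using Finset.strongInduction with
  | _ A ih => ?_
  rcases A.eq_empty_or_nonempty with rfl | hne
  · exact ⟨id, by simp [Set.InjOn], by simp⟩
  by_cases hc : ((graphSquare G).induce (↑A : Set V)).Connected
  · exact hD A hA hc
  have hnonempty : Nonempty (↑A : Set V) := by
    obtain ⟨a, ha⟩ := hne; exact ⟨⟨a, ha⟩⟩
  rw [SimpleGraph.connected_iff] at hc
  push_neg at hc
  have hpc : ¬ ((graphSquare G).induce (↑A : Set V)).Preconnected :=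
    fun h => (hc h).false hnonempty.some
  rw [SimpleGraph.Preconnected] at hpc
  push_neg at hpc
  obtain ⟨x, y, hxy⟩ := hpc
  set H := (graphSquare G).induce (↑A : Set V) with hH
  set C : Finset V := A.filter (fun v => ∃ h : v ∈ A, H.Reachable x ⟨v, h⟩) with hC
  have hCsub : C ⊆ A := filter_subset _ _
  have hxC : (x : V) ∈ C := by
    rw [hC, mem_filter]; exact ⟨x.2, x.2, by rfl⟩
  have hyC : (y : V) ∉ C := by
    rw [hC, mem_filter]
    rintro ⟨-, h, hr⟩
    exact hxy (hr.trans (by rfl))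
  -- no G²-adjacency between C and A \ C
  have hsep : ∀ u ∈ C, ∀ v ∈ A \ C, ¬ (graphSquare G).Adj u v := by
    intro u hu v hv hadj
    rw [hC, mem_filter] at hu
    obtain ⟨huA, huA', hur⟩ := hu
    rw [mem_sdiff] at hv
    refine hv.2 ?_
    rw [hC, mem_filter]
    refine ⟨hv.1, hv.1, hur.trans (SimpleGraph.Adj.reachable ?_)⟩
    exact hadj
  -- disjoint closed neighborhoods across the split
  have hnbhd : ∀ u ∈ C, ∀ v ∈ A \ C, ∀ d, d ∈ closedNbhd G u → d ∉ closedNbhd G v := by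
    intro u hu v hv d hdu hdv
    have huv : u ≠ v := by
      rintro rfl; exact (mem_sdiff.mp hv).2 hu
    refine hsep u hu v hv ⟨huv, ?_⟩
    simp only [closedNbhd, mem_insert, SimpleGraph.mem_neighborFinset] at hdu hdv
    rcases hdu with rfl | hdu
    · rcases hdv with rfl | hdv
      · exact absurd rfl huv
      · exact Or.inl hdv.symm
    · rcases hdv with rfl | hdv
      · exact Or.inl hdu
      · exact Or.inr ⟨d, hdu, hdv.symm⟩
  have hCcard : C.card < A.card := card_lt_card ⟨hCsub, fun h => hyC (h y.2)⟩
  have hDCcard : (A \ C).card < A.card :=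
    card_lt_card ⟨sdiff_subset, fun h => (mem_sdiff.mp (h (hCsub hxC))).2 hxC⟩
  obtain ⟨f₁, hf₁inj, hf₁⟩ := ih C (ssubset_iff_of_subset hCsub |>.mpr
    ⟨y, y.2, hyC⟩) (le_trans (le_of_lt hCcard) hA)
  obtain ⟨f₂, hf₂inj, hf₂⟩ := ih (A \ C)
    (ssubset_iff_of_subset sdiff_subset |>.mpr
      ⟨x, hCsub hxC, fun h => (mem_sdiff.mp h).2 hxC⟩)
    (le_trans (le_of_lt hDCcard) hA)
  refine ⟨fun v => if v ∈ C then f₁ v else f₂ v, ?_, ?_⟩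
  · intro u hu v hv hfe
    simp only [Finset.coe_sort_coe, Set.mem_setOf_eq, Finset.mem_coe] at hu hv
    by_cases huC : u ∈ C <;> by_cases hvC : v ∈ C
    · simp only [huC, hvC, if_pos] at hfe
      exact hf₁inj (by exact_mod_cast huC) (by exact_mod_cast hvC) hfe
    · exfalso
      simp only [huC, hvC, if_pos, if_neg, not_false_iff] at hfe
      have hvAC : v ∈ A \ C := mem_sdiff.mpr ⟨hv, hvC⟩
      exact hnbhd u huC v hvAC (f₁ u) (hf₁ u huC).2 (hfe ▸ (hf₂ v hvAC).2)
    · exfalso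
      simp only [huC, hvC, if_pos, if_neg, not_false_iff] at hfe
      have huAC : u ∈ A \ C := mem_sdiff.mpr ⟨hu, huC⟩
      exact hnbhd v hvC u huAC (f₁ v) (hf₁ v hvC).2 (hfe ▸ (hf₂ u huAC).2)
    · simp only [huC, hvC, if_neg, not_false_iff] at hfe
      exact hf₂inj (by simpa using mem_sdiff.mpr ⟨hu, huC⟩)
        (by simpa using mem_sdiff.mpr ⟨hv, hvC⟩) hfe
  · intro a ha
    by_cases haC : a ∈ C
    · simp only [haC, if_pos]; exact hf₁ a haC
    · simp only [haC, if_neg, not_false_iff]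
      exact hf₂ a (mem_sdiff.mpr ⟨ha, haC⟩)
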